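/- For a pure-jump Markov process ζ on a domain T ⊂ R^d whose jump mechanism is: at rate given by a Poisson process of events (z,r,u) with intensity dz μ(dr) ν_r(du), a particle at x in B(z,r) jumps with probability u to a uniform point of B(z,r)∩T — the integral over starting points x ∈ T of the probability that ζ started at x enters a fixed compact set S after its first jump is finite, bounded by Vol(B(0,3a)) + C ∫_a^∞ r^d ∫_0^1 u ν_r(du) μ(dr) when S ⊂ B(0,a), assuming ∫_0^∞ ∫_0^1 u r^d ν_r(du) μ(dr) < ∞. -/

import Mathlib

open MeasureTheory
open scoped ENNReal

section AuxSLFV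

set_option maxHeartbeats 2000000 in
private lemma aux_div_mul_le (p q : ℝ≥0∞) : p / q * q ≤ p := by
  rw [div_eq_mul_inv, mul_assoc]
  rcases eq_or_ne q 0 with rfl | hq
  · simp
  rcases eq_or_ne q ⊤ with rfl | hq'
  · simp
  · rw [ENNReal.inv_mul_cancel hq hq', mul_one]

set_option maxHeartbeats 2000000 in
private lemma aux_vol_meas {d : ℕ} {S : Set (EuclideanSpace ℝ (Fin d))}
    (hSm : MeasurableSet S) {α : Type*} [MeasurableSpace α]
    {c : α → EuclideanSpace ℝ (Fin d)} {rad : α → ℝ}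
    (hc : Measurable c) (hrad : Measurable rad) :
    Measurable (fun x : α => volume (S ∩ Metric.closedBall (c x) (rad x))) := by
  have hU : MeasurableSet {q : α × EuclideanSpace ℝ (Fin d) |
      q.2 ∈ S ∧ dist q.2 (c q.1) ≤ rad q.1} :=
    (measurable_snd hSm).inter
      (measurableSet_le (measurable_snd.dist (hc.comp measurable_fst))
        (hrad.comp measurable_fst))
  have h := Measurable.lintegral_prod_right'
    (ν := (volume : Measure (EuclideanSpace ℝ (Fin d))))
    (f := Set.indicator {q : α × EuclideanSpace ℝ (Fin d) |
      q.2 ∈ S ∧ dist q.2 (c q.1) ≤ rad q.1} (fun _ => (1 : ℝ≥0∞)))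
    (measurable_const.indicator hU)
  have key : ∀ x : α,
      volume (S ∩ Metric.closedBall (c x) (rad x))
        = ∫⁻ w, Set.indicator {q : α × EuclideanSpace ℝ (Fin d) |
            q.2 ∈ S ∧ dist q.2 (c q.1) ≤ rad q.1} (fun _ => (1 : ℝ≥0∞)) (x, w) ∂volume := by
    intro x
    rw [← lintegral_indicator_one (hSm.inter measurableSet_closedBall)]
    refine lintegral_congr fun w => ?_
    by_cases hw : w ∈ S ∧ dist w (c x) ≤ rad x <;>
      simp [Set.indicator_apply, Set.mem_setOf_eq, Set.mem_inter_iff,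
        Metric.mem_closedBall, hw]
  simp_rw [key]
  exact h

set_option maxHeartbeats 2000000 in
private lemma aux_vol_meas2 {d : ℕ} {Tset : Set (EuclideanSpace ℝ (Fin d))}
    (hT : MeasurableSet Tset) {α : Type*} [MeasurableSpace α]
    {c : α → EuclideanSpace ℝ (Fin d)} {rad : α → ℝ}
    (hc : Measurable c) (hrad : Measurable rad) :
    Measurable (fun x : α => volume (Metric.closedBall (c x) (rad x) ∩ Tset)) := by
  have hU : MeasurableSet {q : α × EuclideanSpace ℝ (Fin d) |
      dist q.2 (c q.1) ≤ rad q.1 ∧ q.2 ∈ Tset} :=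
    (measurableSet_le (measurable_snd.dist (hc.comp measurable_fst))
      (hrad.comp measurable_fst)).inter (measurable_snd hT)
  have h := Measurable.lintegral_prod_right'
    (ν := (volume : Measure (EuclideanSpace ℝ (Fin d))))
    (f := Set.indicator {q : α × EuclideanSpace ℝ (Fin d) |
      dist q.2 (c q.1) ≤ rad q.1 ∧ q.2 ∈ Tset} (fun _ => (1 : ℝ≥0∞)))
    (measurable_const.indicator hU)
  have key : ∀ x : α,
      volume (Metric.closedBall (c x) (rad x) ∩ Tset)
        = ∫⁻ w, Set.indicator {q : α × EuclideanSpace ℝ (Fin d) |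
            dist q.2 (c q.1) ≤ rad q.1 ∧ q.2 ∈ Tset} (fun _ => (1 : ℝ≥0∞)) (x, w) ∂volume := by
    intro x
    rw [← lintegral_indicator_one (measurableSet_closedBall.inter hT)]
    refine lintegral_congr fun w => ?_
    by_cases hw : dist w (c x) ≤ rad x ∧ w ∈ Tset <;>
      simp [Set.indicator_apply, Set.mem_setOf_eq, Set.mem_inter_iff,
        Metric.mem_closedBall, hw]
  simp_rw [key]
  exact h

set_option maxHeartbeats 2000000 in
private lemma aux_rat_meas {d : ℕ} {S Tset : Set (EuclideanSpace ℝ (Fin d))}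
    (hSm : MeasurableSet S) (hT : MeasurableSet Tset) {α : Type*} [MeasurableSpace α]
    {c : α → EuclideanSpace ℝ (Fin d)} {rad : α → ℝ}
    (hc : Measurable c) (hrad : Measurable rad) :
    Measurable (fun x : α =>
      volume (S ∩ Metric.closedBall (c x) (rad x)) /
        volume (Metric.closedBall (c x) (rad x) ∩ Tset)) :=
  (aux_vol_meas hSm hc hrad).div (aux_vol_meas2 hT hc hrad)

set_option maxHeartbeats 2000000 in
private lemma aux_G_meas {d : ℕ} {S Tset : Set (EuclideanSpace ℝ (Fin d))}
    (hSm : MeasurableSet S) (hT : MeasurableSet Tset) :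
    Measurable (fun p : EuclideanSpace ℝ (Fin d) × (ℝ × ℝ) =>
      ∫⁻ z in {z ∈ Tset | dist p.1 z ≤ p.2.1},
        volume (S ∩ Metric.closedBall z p.2.1) /
          volume (Metric.closedBall z p.2.1 ∩ Tset) ∂volume) := by
  have hV : MeasurableSet {w : (EuclideanSpace ℝ (Fin d) × (ℝ × ℝ)) × EuclideanSpace ℝ (Fin d) |
      w.2 ∈ Tset ∧ dist w.1.1 w.2 ≤ w.1.2.1} :=
    (measurable_snd hT).inter
      (measurableSet_le (measurable_fst.fst.dist measurable_snd) measurable_fst.snd.fst)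
  have hjoint : Measurable (fun w : (EuclideanSpace ℝ (Fin d) × (ℝ × ℝ)) ×
      EuclideanSpace ℝ (Fin d) =>
      Set.indicator {w : (EuclideanSpace ℝ (Fin d) × (ℝ × ℝ)) × EuclideanSpace ℝ (Fin d) |
          w.2 ∈ Tset ∧ dist w.1.1 w.2 ≤ w.1.2.1} (fun _ => (1 : ℝ≥0∞)) w *
        (volume (S ∩ Metric.closedBall w.2 w.1.2.1) /
          volume (Metric.closedBall w.2 w.1.2.1 ∩ Tset))) :=
    (measurable_const.indicator hV).mul
      (aux_rat_meas hSm hT measurable_snd measurable_fst.snd.fst)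
  have h := Measurable.lintegral_prod_right'
    (ν := (volume : Measure (EuclideanSpace ℝ (Fin d)))) hjoint
  have key : ∀ p : EuclideanSpace ℝ (Fin d) × (ℝ × ℝ),
      (∫⁻ z in {z ∈ Tset | dist p.1 z ≤ p.2.1},
        volume (S ∩ Metric.closedBall z p.2.1) /
          volume (Metric.closedBall z p.2.1 ∩ Tset) ∂volume)
      = ∫⁻ z, Set.indicator {w : (EuclideanSpace ℝ (Fin d) × (ℝ × ℝ)) ×
            EuclideanSpace ℝ (Fin d) |
            w.2 ∈ Tset ∧ dist w.1.1 w.2 ≤ w.1.2.1} (fun _ => (1 : ℝ≥0∞)) (p, z) *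
          (volume (S ∩ Metric.closedBall z p.2.1) /
            volume (Metric.closedBall z p.2.1 ∩ Tset)) ∂volume := by
    intro p
    have hsp : MeasurableSet {z : EuclideanSpace ℝ (Fin d) | z ∈ Tset ∧ dist p.1 z ≤ p.2.1} :=
      hT.inter (measurableSet_le (measurable_const.dist measurable_id) measurable_const)
    rw [← lintegral_indicator hsp]
    refine lintegral_congr fun z => ?_
    by_cases hz : z ∈ Tset ∧ dist p.1 z ≤ p.2.1 <;>
      simp [Set.indicator_apply, Set.mem_setOf_eq, hz]
  simp_rw [key]
  exact h

set_option maxHeartbeats 2000000 in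
private lemma aux_lintegral_vol {d : ℕ} {S : Set (EuclideanSpace ℝ (Fin d))}
    (hSm : MeasurableSet S) (r : ℝ) :
    ∫⁻ z, volume (S ∩ Metric.closedBall z r) ∂volume
      = volume S * volume (Metric.closedBall (0 : EuclideanSpace ℝ (Fin d)) r) := by
  have hU : MeasurableSet {p : EuclideanSpace ℝ (Fin d) × EuclideanSpace ℝ (Fin d) |
      dist p.2 p.1 ≤ r} :=
    measurableSet_le (measurable_snd.dist measurable_fst) measurable_const
  have key : ∀ z : EuclideanSpace ℝ (Fin d),
      volume (S ∩ Metric.closedBall z r)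
        = ∫⁻ w, Set.indicator S (fun _ => (1 : ℝ≥0∞)) w *
            Set.indicator {p : EuclideanSpace ℝ (Fin d) × EuclideanSpace ℝ (Fin d) |
              dist p.2 p.1 ≤ r} (fun _ => (1 : ℝ≥0∞)) (z, w) ∂volume := by
    intro z
    rw [← lintegral_indicator_one (hSm.inter measurableSet_closedBall)]
    refine lintegral_congr fun w => ?_
    by_cases h1 : w ∈ S <;> by_cases h2 : dist w z ≤ r <;>
      simp [Set.indicator_apply, Set.mem_setOf_eq, Set.mem_inter_iff,
        Metric.mem_closedBall, h1, h2]
  simp_rw [key]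
  have am : AEMeasurable (Function.uncurry fun z w =>
      Set.indicator S (fun _ => (1 : ℝ≥0∞)) w *
        Set.indicator {p : EuclideanSpace ℝ (Fin d) × EuclideanSpace ℝ (Fin d) |
          dist p.2 p.1 ≤ r} (fun _ => (1 : ℝ≥0∞)) (z, w))
      ((volume : Measure (EuclideanSpace ℝ (Fin d))).prod volume) :=
    (((measurable_const.indicator hSm).comp measurable_snd).mul
      (measurable_const.indicator hU)).aemeasurable
  have hsw := lintegral_lintegral_swap am
  rw [hsw]
  have inner : ∀ w : EuclideanSpace ℝ (Fin d),
      (∫⁻ z, Set.indicator S (fun _ => (1 : ℝ≥0∞)) w *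
        Set.indicator {p : EuclideanSpace ℝ (Fin d) × EuclideanSpace ℝ (Fin d) |
          dist p.2 p.1 ≤ r} (fun _ => (1 : ℝ≥0∞)) (z, w) ∂volume)
      = Set.indicator S (fun _ => (1 : ℝ≥0∞)) w *
          volume (Metric.closedBall (0 : EuclideanSpace ℝ (Fin d)) r) := by
    intro w
    have hne : Set.indicator S (fun _ => (1 : ℝ≥0∞)) w ≠ ⊤ := by
      by_cases h : w ∈ S <;> simp [Set.indicator_apply, h]
    rw [lintegral_const_mul' _ _ hne]
    congr 1
    have hbw : ∀ z : EuclideanSpace ℝ (Fin d),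
        Set.indicator {p : EuclideanSpace ℝ (Fin d) × EuclideanSpace ℝ (Fin d) |
          dist p.2 p.1 ≤ r} (fun _ => (1 : ℝ≥0∞)) (z, w)
        = Set.indicator (Metric.closedBall w r) (fun _ => (1 : ℝ≥0∞)) z := by
      intro z
      by_cases hz : dist z w ≤ r <;>
        simp [Set.indicator_apply, Set.mem_setOf_eq, Metric.mem_closedBall,
          dist_comm w z, hz]
    simp_rw [hbw]
    rw [lintegral_indicator_const measurableSet_closedBall, one_mul]
    exact Measure.addHaar_closedBall_center volume w r
  simp_rw [inner]
  rw [lintegral_mul_const' _ _ measure_closedBall_lt_top.ne,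
    lintegral_indicator_const hSm, one_mul]

end AuxSLFV

set_option maxHeartbeats 2000000 in
private theorem aux_slfv_main (d : ℕ) (Tset : Set (EuclideanSpace ℝ (Fin d)))
    (hTset : MeasurableSet Tset) (a : ℝ) (ha : 0 < a)
    (Sset : Set (EuclideanSpace ℝ (Fin d))) (hSm : MeasurableSet Sset)
    (hSa : Sset ⊆ Metric.closedBall (0 : EuclideanSpace ℝ (Fin d)) a ∩ Tset)
    (Λ : Measure (ℝ × ℝ)) [SFinite Λ]
    (J : ℝ≥0∞) (hJpos : 0 < J) (hJfin : J ≠ ⊤)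
    (hJ : ∀ x ∈ Tset,
      ∫⁻ q : ℝ × ℝ, ENNReal.ofReal q.2 * volume {z ∈ Tset | dist x z ≤ q.1} ∂Λ ≤ J) :
    ∫⁻ x in Tset,
        J⁻¹ * ∫⁻ q : ℝ × ℝ, ENNReal.ofReal q.2 *
            ∫⁻ z in {z ∈ Tset | dist x z ≤ q.1},
              volume (Sset ∩ Metric.closedBall z q.1) /
                volume (Metric.closedBall z q.1 ∩ Tset) ∂volume
          ∂Λ ∂volume
      ≤ volume (Metric.closedBall (0 : EuclideanSpace ℝ (Fin d)) (3 * a)) +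
          (J⁻¹ * (volume (Metric.closedBall (0 : EuclideanSpace ℝ (Fin d)) a) *
            volume (Metric.closedBall (0 : EuclideanSpace ℝ (Fin d)) 1))) *
            ∫⁻ q : ℝ × ℝ, (if a ≤ q.1 then ENNReal.ofReal (q.1 ^ d * q.2) else 0) ∂Λ := by
  classical
  have hSsubT : Sset ⊆ Tset := fun s hs => (hSa hs).2
  have hSsubB : Sset ⊆ Metric.closedBall (0 : EuclideanSpace ℝ (Fin d)) a :=
    fun s hs => (hSa hs).1
  have hratle1 : ∀ (z : EuclideanSpace ℝ (Fin d)) (r : ℝ),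
      volume (Sset ∩ Metric.closedBall z r) / volume (Metric.closedBall z r ∩ Tset) ≤ 1 := by
    intro z r
    refine ENNReal.div_le_of_le_mul ?_
    rw [one_mul]
    exact measure_mono fun w hw => ⟨hw.2, hSsubT hw.1⟩
  have hsetm : ∀ (x : EuclideanSpace ℝ (Fin d)) (r : ℝ),
      MeasurableSet {z | z ∈ Tset ∧ dist x z ≤ r} := fun x r =>
    hTset.inter (measurableSet_le (measurable_const.dist measurable_id) measurable_const)
  -- Part A
  have partA : ∫⁻ x in Tset ∩ Metric.closedBall (0 : EuclideanSpace ℝ (Fin d)) (3 * a),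
      J⁻¹ * ∫⁻ q : ℝ × ℝ, ENNReal.ofReal q.2 *
          ∫⁻ z in {z ∈ Tset | dist x z ≤ q.1},
            volume (Sset ∩ Metric.closedBall z q.1) /
              volume (Metric.closedBall z q.1 ∩ Tset) ∂volume ∂Λ ∂volume
      ≤ volume (Metric.closedBall (0 : EuclideanSpace ℝ (Fin d)) (3 * a)) := by
    refine setLIntegral_le_meas (hTset.inter measurableSet_closedBall)
      (fun x hx _ => ?_) (fun x hx hx' => absurd hx.2 hx')
    have h1 : ∫⁻ q : ℝ × ℝ, ENNReal.ofReal q.2 *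
        ∫⁻ z in {z ∈ Tset | dist x z ≤ q.1},
          volume (Sset ∩ Metric.closedBall z q.1) /
            volume (Metric.closedBall z q.1 ∩ Tset) ∂volume ∂Λ ≤ J := by
      refine le_trans (lintegral_mono fun q => ?_) (hJ x hx.1)
      refine mul_le_mul_right ?_ _
      refine setLIntegral_le_meas (hsetm x q.1) (fun z _ _ => hratle1 z q.1)
        (fun z hz hz' => absurd hz hz')
    exact le_trans (mul_le_mul_right h1 _)
      (le_of_eq (ENNReal.inv_mul_cancel hJpos.ne' hJfin))
  -- Part B
  have hAsubT : (Tset \ Metric.closedBall (0 : EuclideanSpace ℝ (Fin d)) (3 * a)) ⊆ Tset :=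
    Set.diff_subset
  have hAm : MeasurableSet (Tset \ Metric.closedBall (0 : EuclideanSpace ℝ (Fin d)) (3 * a)) :=
    hTset.diff measurableSet_closedBall
  have claimQ : ∀ q : ℝ × ℝ,
      ∫⁻ x in Tset \ Metric.closedBall (0 : EuclideanSpace ℝ (Fin d)) (3 * a),
          ENNReal.ofReal q.2 *
            ∫⁻ z in {z ∈ Tset | dist x z ≤ q.1},
              volume (Sset ∩ Metric.closedBall z q.1) /
                volume (Metric.closedBall z q.1 ∩ Tset) ∂volume ∂volume
        ≤ (volume (Metric.closedBall (0 : EuclideanSpace ℝ (Fin d)) a) *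
            volume (Metric.closedBall (0 : EuclideanSpace ℝ (Fin d)) 1)) *
            (if a ≤ q.1 then ENNReal.ofReal (q.1 ^ d * q.2) else 0) := by
    rintro ⟨r, u⟩
    by_cases hr : a ≤ r
    · simp only [if_pos hr]
      have h0r : (0 : ℝ) ≤ r := ha.le.trans hr
      rw [lintegral_const_mul' _ _ ENNReal.ofReal_ne_top]
      have hG : ∫⁻ x in Tset \ Metric.closedBall (0 : EuclideanSpace ℝ (Fin d)) (3 * a),
          ∫⁻ z in {z ∈ Tset | dist x z ≤ r},
            volume (Sset ∩ Metric.closedBall z r) /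
              volume (Metric.closedBall z r ∩ Tset) ∂volume ∂volume
          ≤ volume Sset * volume (Metric.closedBall (0 : EuclideanSpace ℝ (Fin d)) r) := by
        have hrw : ∀ x : EuclideanSpace ℝ (Fin d),
            (∫⁻ z in {z ∈ Tset | dist x z ≤ r},
              volume (Sset ∩ Metric.closedBall z r) /
                volume (Metric.closedBall z r ∩ Tset) ∂volume)
            = ∫⁻ z, Set.indicator {p : EuclideanSpace ℝ (Fin d) × EuclideanSpace ℝ (Fin d) |
                  p.2 ∈ Tset ∧ dist p.1 p.2 ≤ r} (fun _ => (1 : ℝ≥0∞)) (x, z) *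
                (volume (Sset ∩ Metric.closedBall z r) /
                  volume (Metric.closedBall z r ∩ Tset)) ∂volume := by
          intro x
          rw [← lintegral_indicator (hsetm x r)]
          refine lintegral_congr fun z => ?_
          by_cases hz : z ∈ Tset ∧ dist x z ≤ r <;>
            simp [Set.indicator_apply, Set.mem_setOf_eq, hz]
        simp_rw [hrw]
        have hV : MeasurableSet {p : EuclideanSpace ℝ (Fin d) × EuclideanSpace ℝ (Fin d) |
            p.2 ∈ Tset ∧ dist p.1 p.2 ≤ r} :=
          (measurable_snd hTset).inter
            (measurableSet_le (measurable_fst.dist measurable_snd) measurable_const)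
        have am : AEMeasurable (Function.uncurry fun (x z : EuclideanSpace ℝ (Fin d)) =>
            Set.indicator {p : EuclideanSpace ℝ (Fin d) × EuclideanSpace ℝ (Fin d) |
                p.2 ∈ Tset ∧ dist p.1 p.2 ≤ r} (fun _ => (1 : ℝ≥0∞)) (x, z) *
              (volume (Sset ∩ Metric.closedBall z r) /
                volume (Metric.closedBall z r ∩ Tset)))
            ((volume.restrict (Tset \ Metric.closedBall
              (0 : EuclideanSpace ℝ (Fin d)) (3 * a))).prod volume) :=
          ((measurable_const.indicator hV).mul
            (aux_rat_meas hSm hTset measurable_snd measurable_const)).aemeasurable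
        have hsw := lintegral_lintegral_swap am
        rw [hsw]
        refine le_trans (lintegral_mono fun z => ?_) (le_of_eq (aux_lintegral_vol hSm r))
        by_cases hz : z ∈ Tset
        · have heq : ∀ x : EuclideanSpace ℝ (Fin d),
              Set.indicator {p : EuclideanSpace ℝ (Fin d) × EuclideanSpace ℝ (Fin d) |
                  p.2 ∈ Tset ∧ dist p.1 p.2 ≤ r} (fun _ => (1 : ℝ≥0∞)) (x, z) *
                (volume (Sset ∩ Metric.closedBall z r) /
                  volume (Metric.closedBall z r ∩ Tset))
              = Set.indicator (Metric.closedBall z r)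
                  (fun _ => volume (Sset ∩ Metric.closedBall z r) /
                    volume (Metric.closedBall z r ∩ Tset)) x := by
            intro x
            by_cases hx : dist x z ≤ r <;>
              simp [Set.indicator_apply, Set.mem_setOf_eq, Metric.mem_closedBall, hz, hx]
          simp_rw [heq]
          rw [lintegral_indicator_const measurableSet_closedBall,
            Measure.restrict_apply measurableSet_closedBall]
          refine le_trans (mul_le_mul_right
            (measure_mono (Set.inter_subset_inter_right _ hAsubT)) _) ?_
          exact aux_div_mul_le _ _
        · have heq : ∀ x : EuclideanSpace ℝ (Fin d),
              Set.indicator {p : EuclideanSpace ℝ (Fin d) × EuclideanSpace ℝ (Fin d) |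
                  p.2 ∈ Tset ∧ dist p.1 p.2 ≤ r} (fun _ => (1 : ℝ≥0∞)) (x, z) *
                (volume (Sset ∩ Metric.closedBall z r) /
                  volume (Metric.closedBall z r ∩ Tset)) = 0 := by
            intro x
            simp [Set.indicator_apply, Set.mem_setOf_eq, hz]
          simp_rw [heq]
          simp
      have hball : volume (Metric.closedBall (0 : EuclideanSpace ℝ (Fin d)) r)
          = ENNReal.ofReal (r ^ d) *
            volume (Metric.closedBall (0 : EuclideanSpace ℝ (Fin d)) 1) := by
        rw [Measure.addHaar_closedBall' volume _ h0r, finrank_euclideanSpace_fin]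
      have hSvol : volume Sset ≤ volume (Metric.closedBall (0 : EuclideanSpace ℝ (Fin d)) a) :=
        measure_mono hSsubB
      refine le_trans (mul_le_mul_right hG _) ?_
      rw [hball, ENNReal.ofReal_mul (pow_nonneg h0r d)]
      refine le_trans (mul_le_mul_right (mul_le_mul_left hSvol _) _) (le_of_eq ?_)
      ring
    · simp only [if_neg hr, mul_zero]
      refine le_trans (setLIntegral_le_meas (t := (∅ : Set (EuclideanSpace ℝ (Fin d)))) hAm
        (fun x _ hx' => absurd hx' (Set.notMem_empty x)) (fun x hx _ => ?_)) (by simp)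
      have hG0 : (∫⁻ z in {z ∈ Tset | dist x z ≤ r},
          volume (Sset ∩ Metric.closedBall z r) /
            volume (Metric.closedBall z r ∩ Tset) ∂volume) = 0 := by
        refine le_antisymm (le_trans (setLIntegral_le_meas
          (t := (∅ : Set (EuclideanSpace ℝ (Fin d)))) (hsetm x r)
          (fun z _ hz' => absurd hz' (Set.notMem_empty z)) (fun z hz _ => ?_)) (by simp))
          (zero_le)
        have hempty : Sset ∩ Metric.closedBall z r = ∅ := by
          by_contra hne
          obtain ⟨s, hsS, hscb⟩ := Set.nonempty_iff_ne_empty.mpr hne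
          have hxz : dist x z ≤ r := hz.2
          have hzs : dist z s ≤ r := by rw [dist_comm]; exact Metric.mem_closedBall.mp hscb
          have hs0 : dist s (0 : EuclideanSpace ℝ (Fin d)) ≤ a :=
            Metric.mem_closedBall.mp (hSsubB hsS)
          have hx0 : ¬ dist x (0 : EuclideanSpace ℝ (Fin d)) ≤ 3 * a := fun h =>
            hx.2 (Metric.mem_closedBall.mpr h)
          have htri : dist x (0 : EuclideanSpace ℝ (Fin d)) ≤
              dist x z + dist z s + dist s (0 : EuclideanSpace ℝ (Fin d)) :=
            dist_triangle4 x z s 0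
          have hra : r < a := not_le.mp hr
          exact hx0 (by linarith)
        rw [hempty]
        simp
      rw [hG0, mul_zero]
  have hKfin : volume (Metric.closedBall (0 : EuclideanSpace ℝ (Fin d)) a) *
      volume (Metric.closedBall (0 : EuclideanSpace ℝ (Fin d)) 1) ≠ ⊤ :=
    ENNReal.mul_ne_top measure_closedBall_lt_top.ne measure_closedBall_lt_top.ne
  have partB : ∫⁻ x in Tset \ Metric.closedBall (0 : EuclideanSpace ℝ (Fin d)) (3 * a),
      J⁻¹ * ∫⁻ q : ℝ × ℝ, ENNReal.ofReal q.2 *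
          ∫⁻ z in {z ∈ Tset | dist x z ≤ q.1},
            volume (Sset ∩ Metric.closedBall z q.1) /
              volume (Metric.closedBall z q.1 ∩ Tset) ∂volume ∂Λ ∂volume
      ≤ (J⁻¹ * (volume (Metric.closedBall (0 : EuclideanSpace ℝ (Fin d)) a) *
          volume (Metric.closedBall (0 : EuclideanSpace ℝ (Fin d)) 1))) *
          ∫⁻ q : ℝ × ℝ, (if a ≤ q.1 then ENNReal.ofReal (q.1 ^ d * q.2) else 0) ∂Λ := by
    rw [lintegral_const_mul' _ _ (ENNReal.inv_ne_top.mpr hJpos.ne')]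
    have am : AEMeasurable (Function.uncurry fun (x : EuclideanSpace ℝ (Fin d)) (q : ℝ × ℝ) =>
        ENNReal.ofReal q.2 *
          ∫⁻ z in {z ∈ Tset | dist x z ≤ q.1},
            volume (Sset ∩ Metric.closedBall z q.1) /
              volume (Metric.closedBall z q.1 ∩ Tset) ∂volume)
        ((volume.restrict (Tset \ Metric.closedBall
          (0 : EuclideanSpace ℝ (Fin d)) (3 * a))).prod Λ) :=
      ((ENNReal.measurable_ofReal.comp measurable_snd.snd).mul
        (aux_G_meas hSm hTset)).aemeasurable
    have hsw := lintegral_lintegral_swap am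
    rw [hsw]
    refine le_trans (mul_le_mul_right (lintegral_mono claimQ) _) (le_of_eq ?_)
    rw [lintegral_const_mul' _ _ hKfin]; ring
  calc ∫⁻ x in Tset,
        J⁻¹ * ∫⁻ q : ℝ × ℝ, ENNReal.ofReal q.2 *
            ∫⁻ z in {z ∈ Tset | dist x z ≤ q.1},
              volume (Sset ∩ Metric.closedBall z q.1) /
                volume (Metric.closedBall z q.1 ∩ Tset) ∂volume ∂Λ ∂volume
      = ∫⁻ x in (Tset ∩ Metric.closedBall (0 : EuclideanSpace ℝ (Fin d)) (3 * a)) ∪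
          (Tset \ Metric.closedBall (0 : EuclideanSpace ℝ (Fin d)) (3 * a)),
          J⁻¹ * ∫⁻ q : ℝ × ℝ, ENNReal.ofReal q.2 *
            ∫⁻ z in {z ∈ Tset | dist x z ≤ q.1},
              volume (Sset ∩ Metric.closedBall z q.1) /
                volume (Metric.closedBall z q.1 ∩ Tset) ∂volume ∂Λ ∂volume := by
        rw [Set.inter_union_diff]
    _ ≤ _ + _ := lintegral_union_le _ _ _
    _ ≤ _ := add_le_add partA partB

/-- First-jump entrance bound: for the SLFV jump process, the probability that the
first jump of a particle started at `x` lands in a compact set `S ⊆ B(0,a)` is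
`F x = J⁻¹ ∫∫ u ∫_{z ∈ T : x ∈ B(z,r)} Vol(S ∩ B(z,r))/Vol(B(z,r) ∩ T) dz ν_r(du)μ(dr)`,
and its integral over starting points `x ∈ T` is bounded by
`Vol(B(0,3a)) + C ∫_a^∞ r^d ∫ u ν_r(du) μ(dr)` for some finite constant `C`. -/
theorem first_jump_entrance_bound (d : ℕ) (Tset : Set (EuclideanSpace ℝ (Fin d)))
    (hTset : MeasurableSet Tset)
    (a : ℝ) (ha : 0 < a)
    (Sset : Set (EuclideanSpace ℝ (Fin d))) (hS : IsCompact Sset)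
    (hSa : Sset ⊆ Metric.closedBall (0 : EuclideanSpace ℝ (Fin d)) a ∩ Tset)
    (μ : Measure ℝ) [SigmaFinite μ] (ν : ℝ → Measure ℝ)
    (hν : ∀ r, IsProbabilityMeasure (ν r))
    (hνsupp : ∀ r, ν r (Set.Icc (0:ℝ) 1) = 1)
    (hμsupp : μ (Set.Ioi (0:ℝ))ᶜ = 0)
    (hint : ∫⁻ r, ∫⁻ u, ENNReal.ofReal u * ENNReal.ofReal (r ^ d) ∂(ν r) ∂μ < ⊤)
    (J : ℝ≥0∞) (hJpos : 0 < J) (hJfin : J ≠ ⊤)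
    (hJ : ∀ x ∈ Tset,
      ∫⁻ q : ℝ × ℝ, ENNReal.ofReal q.2 * volume {z ∈ Tset | dist x z ≤ q.1}
          ∂(μ.bind (fun r => (ν r).map (fun u => (r, u)))) ≤ J) :
    ∃ C : ℝ≥0∞, C ≠ ⊤ ∧
      ∫⁻ x in Tset,
          J⁻¹ * ∫⁻ q : ℝ × ℝ, ENNReal.ofReal q.2 *
              ∫⁻ z in {z ∈ Tset | dist x z ≤ q.1},
                volume (Sset ∩ Metric.closedBall z q.1) /
                  volume (Metric.closedBall z q.1 ∩ Tset) ∂volume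
            ∂(μ.bind (fun r => (ν r).map (fun u => (r, u)))) ∂volume
        ≤ volume (Metric.closedBall (0 : EuclideanSpace ℝ (Fin d)) (3 * a)) +
            C * ∫⁻ q : ℝ × ℝ, (if a ≤ q.1 then ENNReal.ofReal (q.1 ^ d * q.2) else 0)
              ∂(μ.bind (fun r => (ν r).map (fun u => (r, u)))) := by
  classical
  have hsf : SFinite (μ.bind (fun r => (ν r).map (fun u => (r, u)))) := by
    by_cases hmeas : AEMeasurable (fun r => (ν r).map (fun u => (r, u))) μ
    · set m := hmeas.mk _ with hm
      have hmm : Measurable m := hmeas.measurable_mk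
      have hae : (fun r => (ν r).map (fun u => (r, u))) =ᵐ[μ] m := hmeas.ae_eq_mk
      set t := toMeasurable μ {r | (ν r).map (fun u => (r, u)) ≠ m r} with ht
      have htm : MeasurableSet t := measurableSet_toMeasurable _ _
      have htnull : μ t = 0 := by
        rw [ht, measure_toMeasurable]
        exact ae_iff.mp hae
      set g : ℝ → Measure (ℝ × ℝ) :=
        t.piecewise (fun _ => (ν 0).map (fun u => ((0 : ℝ), u))) m with hgdef
      have hgmeas : Measurable g := Measurable.piecewise htm measurable_const hmm
      have hprob0 : ∀ r : ℝ, IsProbabilityMeasure ((ν r).map (fun u => (r, u))) := by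
        intro r
        haveI := hν r
        exact Measure.isProbabilityMeasure_map (measurable_prodMk_left.aemeasurable)
      have hgprob : ∀ r, IsProbabilityMeasure (g r) := by
        intro r
        by_cases hrt : r ∈ t
        · rw [hgdef, Set.piecewise_eq_of_mem _ _ _ hrt]
          exact hprob0 0
        · rw [hgdef, Set.piecewise_eq_of_notMem _ _ _ hrt]
          have hgr : (ν r).map (fun u => (r, u)) = m r := by
            by_contra h
            exact hrt (subset_toMeasurable _ _ h)
          rw [← hgr]
          exact hprob0 r
      have hgae : (fun r => (ν r).map (fun u => (r, u))) =ᵐ[μ] g := by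
        rw [Filter.EventuallyEq, ae_iff]
        refine measure_mono_null (fun r hr => ?_) htnull
        simp only [Set.mem_setOf_eq] at hr
        by_contra hrt
        apply hr
        rw [hgdef, Set.piecewise_eq_of_notMem _ _ _ hrt]
        by_contra h
        exact hrt (subset_toMeasurable _ _ h)
      have hbindg : μ.bind (fun r => (ν r).map (fun u => (r, u))) = μ.bind g := by
        unfold Measure.bind
        rw [Measure.map_congr hgae]
      rw [hbindg]
      let κ : ProbabilityTheory.Kernel ℝ (ℝ × ℝ) := ⟨g, hgmeas⟩
      haveI : ProbabilityTheory.IsMarkovKernel κ := ⟨fun r => hgprob r⟩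
      have hbk : μ.bind g = (μ.compProd κ).snd := by
        ext s hs
        rw [Measure.snd_apply hs, Measure.compProd_apply (measurable_snd hs),
          Measure.bind_apply hs hgmeas.aemeasurable]
        rfl
      rw [hbk]
      infer_instance
    · have hz : μ.bind (fun r => (ν r).map (fun u => (r, u))) = 0 := by
        unfold Measure.bind
        rw [Measure.map_of_not_aemeasurable hmeas]
        simp
      rw [hz]
      infer_instance
  refine ⟨J⁻¹ * (volume (Metric.closedBall (0 : EuclideanSpace ℝ (Fin d)) a) *
    volume (Metric.closedBall (0 : EuclideanSpace ℝ (Fin d)) 1)), ?_, ?_⟩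
  · exact ENNReal.mul_ne_top (ENNReal.inv_ne_top.mpr hJpos.ne')
      (ENNReal.mul_ne_top measure_closedBall_lt_top.ne measure_closedBall_lt_top.ne)
  · exact aux_slfv_main d Tset hTset a ha Sset hS.measurableSet hSa _ J hJpos hJfin hJ
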